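/- In a distributive binary G-space X, for every x ∈ X the stationary subgroup G_{(x,x)} = {g ∈ G : g(x,x) = x} is a normal subgroup of G. -/

import Mathlib

def IsBinAct {G X : Type*} [Group G] (a : G → X → X → X) : Prop :=
  (∀ g h x y, a (g * h) x y = a g x (a h x y)) ∧ ∀ x y, a 1 x y = y

def IsDistribAct {G X : Type*} [Group G] (a : G → X → X → X) : Prop :=
  ∀ g h x y z, a g x (a h y z) = a h (a g x y) (a g x z)

def IsEffectiveAct {G X : Type*} [Group G] (a : G → X → X → X) : Prop :=
  ∀ g, (∀ x y, a g x y = y) → g = 1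

def IsSemitransAct {G X : Type*} [Group G] (a : G → X → X → X) : Prop :=
  (∀ g x, a g x x = x) ∧ ∀ x y : X, x ≠ y → Set.range (fun g => a g x y) = {x}ᶜ

/-- In a distributive binary `G`-space, the stationary subgroup of a point is normal. -/
theorem stationary_subgroup_of_point_normal (G X : Type*) [Group G] (a : G → X → X → X)
    (ha : IsBinAct a) (hd : IsDistribAct a) (x : X) :
    ∃ H : Subgroup G, H.Normal ∧ (H : Set G) = {g : G | a g x x = x} := by
  obtain ⟨hmul, hone⟩ := ha
  -- any element of the stabilizer fixes (x, a g x x) for every g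
  have key : ∀ h g : G, a h x x = x → a h x (a g x x) = a g x x := by
    intro h g hh
    rw [hd h g x x x, hh]
  refine ⟨{ carrier := {g : G | a g x x = x}
            one_mem' := hone x x
            mul_mem' := ?_
            inv_mem' := ?_ }, ⟨?_⟩, rfl⟩
  · intro g h hg hh
    simp only [Set.mem_setOf_eq] at *
    rw [hmul, hh, hg]
  · intro g hg
    simp only [Set.mem_setOf_eq] at *
    calc a g⁻¹ x x = a g⁻¹ x (a g x x) := by rw [hg]
    _ = a (g⁻¹ * g) x x := (hmul _ _ _ _).symm
    _ = x := by rw [inv_mul_cancel, hone]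
  · intro h hh g
    simp only [Subgroup.mem_mk, Set.mem_setOf_eq] at *
    change a h x x = x at hh
    change a (g * h * g⁻¹) x x = x
    rw [hmul, hmul, key h g⁻¹ hh, ← hmul, mul_inv_cancel, hone]
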